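/- For every h > 0, every x ∈ ℝ, and every function f : ℝ → ℝ that is twice continuously differentiable on [x − h/2, x + 3h/2] with |f''| ≤ K there, one has |−f(x − h/2) + 4f(x) + 6f(x + h/2) + 4f(x + h) − f(x + 3h/2) − 12 f(x + h/2)| ≤ 2 K h². -/

import Mathlib

open Set

lemma second_diff_bound {f : ℝ → ℝ} {a b K : ℝ} (hab : a < b)
    (hf : ContDiffOn ℝ 2 f (Icc a b))
    (hK : ∀ z ∈ Icc a b, |iteratedDerivWithin 2 f (Icc a b) z| ≤ K)
    {y s : ℝ} (hs : 0 < s) (h1 : a ≤ y - s) (h2 : y + s ≤ b) :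
    |f (y + s) + f (y - s) - 2 * f y| ≤ 2 * K * s ^ 2 := by
  have hu : UniqueDiffOn ℝ (Icc a b) := uniqueDiffOn_Icc hab
  set f1 : ℝ → ℝ := derivWithin f (Icc a b) with hf1
  have hK0 : 0 ≤ K := le_trans (abs_nonneg _) (hK a ⟨le_refl a, hab.le⟩)
  have hdiff : DifferentiableOn ℝ f (Icc a b) := hf.differentiableOn (by norm_num)
  have hdf : ∀ z ∈ Icc a b, HasDerivWithinAt f (f1 z) (Icc a b) z := fun z hz =>
    (hdiff z hz).hasDerivWithinAt
  have hf1c : ContDiffOn ℝ 1 f1 (Icc a b) := hf.derivWithin hu (by norm_num)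
  have hdf1 : ∀ z ∈ Icc a b, HasDerivWithinAt f1 (iteratedDerivWithin 2 f (Icc a b) z) (Icc a b) z := by
    intro z hz
    have hd : DifferentiableWithinAt ℝ f1 (Icc a b) z :=
      (hf1c.differentiableOn (by norm_num)) z hz
    have : iteratedDerivWithin 2 f (Icc a b) z = derivWithin f1 (Icc a b) z := by
      rw [iteratedDerivWithin_succ]
      exact derivWithin_congr (fun w hw => congrFun iteratedDerivWithin_one w)
        (congrFun iteratedDerivWithin_one z)
    rw [this]
    exact hd.hasDerivWithinAt
  -- f1 is K-Lipschitz on Icc a b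
  have hlip : ∀ u ∈ Icc a b, ∀ v ∈ Icc a b, ‖f1 u - f1 v‖ ≤ K * ‖u - v‖ := by
    intro u hu' v hv
    exact (convex_Icc a b).norm_image_sub_le_of_norm_hasDerivWithin_le hdf1
      (fun z hz => by simpa using hK z hz) hv hu'
  -- the function ψ
  set ψ : ℝ → ℝ := fun t => f (y + t) + f (y - t) - 2 * f y with hψ
  have hmem : ∀ t ∈ Icc (0:ℝ) s, y + t ∈ Icc a b := by
    intro t ht
    constructor <;> [nlinarith [ht.1, ht.2]; nlinarith [ht.1, ht.2]]
  have hmem' : ∀ t ∈ Icc (0:ℝ) s, y - t ∈ Icc a b := by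
    intro t ht
    constructor <;> [nlinarith [ht.1, ht.2]; nlinarith [ht.1, ht.2]]
  have hψd : ∀ t ∈ Icc (0:ℝ) s, HasDerivWithinAt ψ (f1 (y + t) - f1 (y - t)) (Icc 0 s) t := by
    intro t ht
    have h1' : HasDerivWithinAt (fun t => f (y + t)) (f1 (y + t)) (Icc 0 s) t := by
      have := (hdf (y + t) (hmem t ht)).comp t
        (((hasDerivWithinAt_id t (Icc (0:ℝ) s)).const_add y)) hmem
      simpa [Function.comp_def] using this
    have h2' : HasDerivWithinAt (fun t => f (y - t)) (-f1 (y - t)) (Icc 0 s) t := by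
      have := (hdf (y - t) (hmem' t ht)).comp t
        (((hasDerivWithinAt_id t (Icc (0:ℝ) s)).neg.const_add y)) hmem'
      simpa [Function.comp_def, sub_eq_add_neg] using this
    have := (h1'.add h2').sub_const (2 * f y)
    simpa [hψ, sub_eq_add_neg] using this
  have hψbound : ∀ t ∈ Icc (0:ℝ) s, ‖f1 (y + t) - f1 (y - t)‖ ≤ 2 * K * s := by
    intro t ht
    calc ‖f1 (y + t) - f1 (y - t)‖ ≤ K * ‖(y + t) - (y - t)‖ :=
          hlip _ (hmem t ht) _ (hmem' t ht)
      _ = K * (2 * |t|) := by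
          have e : (y + t) - (y - t) = 2 * t := by ring
          rw [e, Real.norm_eq_abs, abs_mul, abs_two]
      _ ≤ 2 * K * s := by
          rw [abs_of_nonneg ht.1]; nlinarith [ht.1, ht.2]
  have key : ‖ψ s - ψ 0‖ ≤ (2 * K * s) * ‖s - 0‖ :=
    (convex_Icc (0:ℝ) s).norm_image_sub_le_of_norm_hasDerivWithin_le hψd hψbound
      ⟨le_refl 0, hs.le⟩ ⟨hs.le, le_refl s⟩
  have hψ0 : ψ 0 = 0 := by
    show f (y + 0) + f (y - 0) - 2 * f y = 0
    rw [add_zero, sub_zero]; ring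
  have : |f (y + s) + f (y - s) - 2 * f y| ≤ 2 * K * s * s := by
    have := key
    rw [hψ0, sub_zero, sub_zero, Real.norm_eq_abs, Real.norm_eq_abs, abs_of_nonneg hs.le] at this
    simpa [hψ] using this
  nlinarith [this]

/-- Simpson-type five-point estimate for the load terms of the simplified weak Galerkin /
finite difference scheme: for `h > 0` and `f` twice continuously differentiable on
`[x − h/2, x + 3h/2]` with `|f''| ≤ K` there,
`|−f(x−h/2) + 4f(x) + 6f(x+h/2) + 4f(x+h) − f(x+3h/2) − 12 f(x+h/2)| ≤ 2Kh²`. -/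
theorem stmt12 (h : ℝ) (hh : 0 < h) (x : ℝ) (f : ℝ → ℝ) (K : ℝ)
    (hf : ContDiffOn ℝ 2 f (Set.Icc (x - h / 2) (x + 3 * h / 2)))
    (hK : ∀ y ∈ Set.Icc (x - h / 2) (x + 3 * h / 2),
      |iteratedDerivWithin 2 f (Set.Icc (x - h / 2) (x + 3 * h / 2)) y| ≤ K) :
    |-f (x - h / 2) + 4 * f x + 6 * f (x + h / 2) + 4 * f (x + h) - f (x + 3 * h / 2) -
        12 * f (x + h / 2)|
      ≤ 2 * K * h ^ 2 := by
  have hab : x - h / 2 < x + 3 * h / 2 := by linarith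
  have hs : (0:ℝ) < h / 2 := by linarith
  have hA := second_diff_bound hab hf hK hs (y := x) (by linarith) (by linarith)
  have hB := second_diff_bound hab hf hK hs (y := x + h / 2) (by linarith) (by linarith)
  have hC := second_diff_bound hab hf hK hs (y := x + h) (by linarith) (by linarith)
  have e1 : x + h / 2 + h / 2 = x + h := by ring
  have e2 : x + h / 2 - h / 2 = x := by ring
  have e3 : x + h + h / 2 = x + 3 * h / 2 := by ring
  have e4 : x + h - h / 2 = x + h / 2 := by ring
  rw [e1, e2] at hB
  rw [e3, e4] at hC
  rw [abs_le] at hA hB hC ⊢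
  constructor <;> nlinarith [hA.1, hA.2, hB.1, hB.2, hC.1, hC.2, hh]
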